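/- If X_0, X_1, ... are i.i.d. real random variables with distribution function F, and (u_n) is a sequence of real numbers such that n·P(X_0 > u_n) → τ for some τ ≥ 0, then P(max{X_0,...,X_{n-1}} ≤ u_n) → e^{−τ} as n → ∞. -/

import Mathlib

open MeasureTheory Filter ProbabilityTheory

theorem iid_max_evl {Ω : Type*} [MeasurableSpace Ω] (μpr : Measure Ω) [IsProbabilityMeasure μpr]
    (X : ℕ → Ω → ℝ) (hmeas : ∀ i, Measurable (X i))
    (hindep : iIndepFun X μpr)
    (hident : ∀ i, IdentDistrib (X i) (X 0) μpr μpr)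
    (u : ℕ → ℝ) (τ : ℝ) (hτ : 0 ≤ τ)
    (hu : Tendsto (fun n : ℕ => (n : ℝ) * (μpr {ω | X 0 ω > u n}).toReal) atTop (nhds τ)) :
    Tendsto (fun n => (μpr {ω | ∀ i < n, X i ω ≤ u n}).toReal) atTop
      (nhds (Real.exp (-τ))) := by
  set p : ℕ → ℝ := fun n => (μpr {ω | X 0 ω > u n}).toReal with hp
  have hp0 : ∀ n, 0 ≤ p n := fun n => ENNReal.toReal_nonneg
  have hp1 : ∀ n, p n ≤ 1 := by
    intro n
    have := prob_le_one (μ := μpr) (s := {ω | X 0 ω > u n})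
    exact ENNReal.toReal_le_of_le_ofReal zero_le_one (by simpa using this)
  -- p n → 0
  have hptend : Tendsto p atTop (nhds 0) := by
    have h1 : Tendsto (fun n : ℕ => ((n:ℝ) * p n) * (1 / n)) atTop (nhds (τ * 0)) :=
      hu.mul tendsto_one_div_atTop_nhds_zero_nat
    rw [mul_zero] at h1
    refine h1.congr' ?_
    filter_upwards [eventually_ge_atTop 1] with n hn
    have : (n : ℝ) ≠ 0 := by positivity
    field_simp
  -- Step 1: the probability equals (1 - p n)^n
  have hkey : ∀ n, (μpr {ω | ∀ i < n, X i ω ≤ u n}).toReal = (1 - p n) ^ n := by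
    intro n
    have hset : {ω | ∀ i < n, X i ω ≤ u n} = ⋂ i ∈ Finset.range n, X i ⁻¹' Set.Iic (u n) := by
      ext ω; simp [Set.mem_iInter]
    have hmeasint : μpr (⋂ i ∈ Finset.range n, X i ⁻¹' Set.Iic (u n))
        = ∏ i ∈ Finset.range n, μpr (X i ⁻¹' Set.Iic (u n)) := by
      exact hindep.meas_biInter (fun i _ => ⟨Set.Iic (u n), measurableSet_Iic, rfl⟩)
    have hident' : ∀ i, μpr (X i ⁻¹' Set.Iic (u n)) = μpr (X 0 ⁻¹' Set.Iic (u n)) :=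
      fun i => (hident i).measure_mem_eq measurableSet_Iic
    have hcompl : μpr (X 0 ⁻¹' Set.Iic (u n)) = 1 - μpr {ω | X 0 ω > u n} := by
      have : {ω | X 0 ω > u n} = (X 0 ⁻¹' Set.Iic (u n))ᶜ := by
        ext ω; simp [Set.mem_compl_iff, not_le]
      rw [this, prob_compl_eq_one_sub ((hmeas 0) measurableSet_Iic)]
      rw [ENNReal.sub_sub_cancel ENNReal.one_ne_top (prob_le_one)]
    have htoReal : (μpr (X 0 ⁻¹' Set.Iic (u n))).toReal = 1 - p n := by
      rw [hcompl, ENNReal.toReal_sub_of_le prob_le_one ENNReal.one_ne_top]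
      simp [hp]
    rw [hset, hmeasint, Finset.prod_congr rfl (fun i _ => hident' i), Finset.prod_const,
      Finset.card_range, ENNReal.toReal_pow, htoReal]
  simp only [hkey]
  -- Step 2: (1 - p n)^n → exp (-τ)
  have hev : ∀ᶠ n in atTop, p n ≤ 1 / 2 := hptend.eventually (by
    have : (0:ℝ) < 1/2 := by norm_num
    exact eventually_le_nhds this)
  -- squeeze n * log (1 - p n)
  have hlower : Tendsto (fun n : ℕ => -(((n:ℝ) * p n) / (1 - p n))) atTop (nhds (-τ)) := by
    have hd : Tendsto (fun n : ℕ => (1 : ℝ) - p n) atTop (nhds 1) := by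
      simpa using (tendsto_const_nhds.sub hptend)
    have := (hu.div hd one_ne_zero).neg
    simpa using this
  have hupper : Tendsto (fun n : ℕ => -((n:ℝ) * p n)) atTop (nhds (-τ)) := hu.neg
  have hlog : Tendsto (fun n : ℕ => (n : ℝ) * Real.log (1 - p n)) atTop (nhds (-τ)) := by
    refine tendsto_of_tendsto_of_tendsto_of_le_of_le' hlower hupper ?_ ?_
    · filter_upwards [hev] with n hn
      have h1 : (0:ℝ) < 1 - p n := by linarith
      have h2 : Real.log (1 / (1 - p n)) ≤ 1 / (1 - p n) - 1 :=
        Real.log_le_sub_one_of_pos (by positivity)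
      rw [Real.log_div one_ne_zero (ne_of_gt h1), Real.log_one] at h2
      have h3 : -(p n / (1 - p n)) ≤ Real.log (1 - p n) := by
        have : 1 / (1 - p n) - 1 = p n / (1 - p n) := by field_simp; ring
        linarith [h2, this ▸ h2]
      calc -(((n:ℝ) * p n) / (1 - p n)) = (n:ℝ) * (-(p n / (1 - p n))) := by ring
        _ ≤ (n:ℝ) * Real.log (1 - p n) := by
            apply mul_le_mul_of_nonneg_left h3 (Nat.cast_nonneg n)
    · filter_upwards [hev] with n hn
      have h1 : (0:ℝ) < 1 - p n := by linarith
      have h2 : Real.log (1 - p n) ≤ -(p n) := by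
        have := Real.log_le_sub_one_of_pos h1
        linarith
      calc (n:ℝ) * Real.log (1 - p n) ≤ (n:ℝ) * (-(p n)) :=
            mul_le_mul_of_nonneg_left h2 (Nat.cast_nonneg n)
        _ = -((n:ℝ) * p n) := by ring
  have hexp : Tendsto (fun n : ℕ => Real.exp ((n : ℝ) * Real.log (1 - p n))) atTop
      (nhds (Real.exp (-τ))) := (Real.continuous_exp.tendsto _).comp hlog
  refine hexp.congr' ?_
  filter_upwards [hev] with n hn
  have h1 : (0:ℝ) < 1 - p n := by linarith
  rw [Real.exp_nat_mul, Real.exp_log h1]
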